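/- Let s ≥ 0 and (s_j)_{j≥1} nonnegative reals with s = ∑_j s_j, and let h : [0,∞) → [0,∞) be increasing, strictly subadditive (h(a+b) < h(a)+h(b) for a,b > 0) with h(0)=0. If h(s) = ∑_j h(s_j), then there is at most one index j₀ with s_{j₀} ≠ 0, and for that index s_{j₀} = s. -/
import Mathlib


open Filter Topology

theorem rigidity_strict_subadditive (s : ℝ) (hs : 0 ≤ s)
    (f : ℕ → ℝ) (hf : ∀ j, 0 ≤ f j) (hsum : HasSum f s)
    (h : ℝ → ℝ) (hmono : MonotoneOn h (Set.Ici 0)) (h0 : h 0 = 0)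
    (hsub : ∀ a > (0:ℝ), ∀ b > (0:ℝ), h (a + b) < h a + h b)
    (heq : HasSum (fun j => h (f j)) (h s)) :
    (∀ i j, f i ≠ 0 → f j ≠ 0 → i = j) ∧ (∀ j, f j ≠ 0 → f j = s) := by
  have hnn : ∀ x : ℝ, 0 ≤ x → 0 ≤ h x := by
    intro x hx
    have := hmono Set.self_mem_Ici hx hx
    linarith
  have hweak : ∀ a b : ℝ, 0 ≤ a → 0 ≤ b → h (a + b) ≤ h a + h b := by
    intro a b ha hb
    rcases ha.eq_or_lt with rfl | ha'
    · simp [h0]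
    rcases hb.eq_or_lt with rfl | hb'
    · simp [h0]
    · exact (hsub a ha' b hb').le
  -- finite subadditivity with an offset
  have finsub : ∀ (F : Finset ℕ) (c : ℝ), 0 ≤ c →
      h (c + ∑ k ∈ F, f k) ≤ h c + ∑ k ∈ F, h (f k) := by
    intro F
    induction F using Finset.induction_on with
    | empty => intro c hc; simp
    | @insert a F hnotmem ih =>
      intro c hc
      rw [Finset.sum_insert hnotmem, Finset.sum_insert hnotmem]
      have h1 : c + (f a + ∑ k ∈ F, f k) = (c + f a) + ∑ k ∈ F, f k := by ring
      rw [h1]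
      have h2 := ih (c + f a) (add_nonneg hc (hf a))
      have h3 := hweak c (f a) hc (hf a)
      linarith
  have part1 : ∀ i j, f i ≠ 0 → f j ≠ 0 → i = j := by
    by_contra hcon
    push_neg at hcon
    obtain ⟨i, j, hi0, hj0, hij⟩ := hcon
    have hfi : 0 < f i := (hf i).lt_of_ne (Ne.symm hi0)
    have hfj : 0 < f j := (hf j).lt_of_ne (Ne.symm hj0)
    set δ : ℝ := h (f i) + h (f j) - h (f i + f j) with hδdef
    have hδ : 0 < δ := by
      have := hsub (f i) hfi (f j) hfj
      simp only [hδdef]; linarith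
    set σ : ℕ → ℝ := fun N => ∑ k ∈ Finset.range N, f k with hσdef
    have hσle : ∀ N, σ N ≤ s := fun N =>
      sum_le_hasSum _ (fun k _ => hf k) hsum
    have hHle : ∀ N, ∑ k ∈ Finset.range N, h (f k) ≤ h s := fun N =>
      sum_le_hasSum _ (fun k _ => hnn _ (hf k)) heq
    -- key estimate
    have key : ∀ N, i < N → j < N → h (σ N) + δ ≤ h s := by
      intro N hiN hjN
      have hiR : i ∈ Finset.range N := Finset.mem_range.2 hiN
      have hjR : j ∈ (Finset.range N).erase i :=
        Finset.mem_erase.2 ⟨Ne.symm hij, Finset.mem_range.2 hjN⟩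
      set F : Finset ℕ := ((Finset.range N).erase i).erase j with hF
      have hsplitf : σ N = (f i + f j) + ∑ k ∈ F, f k := by
        show ∑ k ∈ Finset.range N, f k = (f i + f j) + ∑ k ∈ F, f k
        rw [← Finset.add_sum_erase _ f hiR, ← Finset.add_sum_erase _ f hjR]
        ring
      have hsplith : ∑ k ∈ Finset.range N, h (f k)
          = h (f i) + h (f j) + ∑ k ∈ F, h (f k) := by
        rw [← Finset.add_sum_erase _ (fun k => h (f k)) hiR,
          ← Finset.add_sum_erase _ (fun k => h (f k)) hjR]
        ring
      have h4 : h (σ N) ≤ h (f i + f j) + ∑ k ∈ F, h (f k) := by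
        rw [hsplitf]
        exact finsub F (f i + f j) (by positivity)
      have h5 := hHle N
      rw [hsplith] at h5
      simp only [hδdef]
      linarith
    have hσtend : Tendsto σ atTop (𝓝 s) := hsum.tendsto_sum_nat
    have htail : Tendsto (fun N => s - σ N) atTop (𝓝 0) := by
      have : Tendsto (fun N => s - σ N) atTop (𝓝 (s - s)) :=
        tendsto_const_nhds.sub hσtend
      simpa using this
    by_cases hjump : ∃ x : ℝ, 0 < x ∧ h x < δ
    · obtain ⟨x, hx, hxδ⟩ := hjump
      have hev : ∀ᶠ N in atTop, s - σ N < x :=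
        htail.eventually_lt_const hx
      obtain ⟨N, hN1, hN2⟩ :=
        ((hev.and (eventually_ge_atTop (max i j + 1))).exists)
      have hiN : i < N := lt_of_lt_of_le (Nat.lt_succ_of_le (le_max_left i j)) hN2
      have hjN : j < N := lt_of_lt_of_le (Nat.lt_succ_of_le (le_max_right i j)) hN2
      have hk := key N hiN hjN
      rcases eq_or_lt_of_le (hσle N) with heqs | hlt
      · rw [heqs] at hk; linarith
      · have hσpos : 0 < σ N := by
          have := Finset.single_le_sum (fun k _ => hf k) (Finset.mem_range.2 hiN)
          exact lt_of_lt_of_le hfi this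
        have hrpos : 0 < s - σ N := by linarith
        have hstrict : h s < h (σ N) + h (s - σ N) := by
          have := hsub (σ N) hσpos (s - σ N) hrpos
          have hss : σ N + (s - σ N) = s := by ring
          rwa [hss] at this
        have hmle : h (s - σ N) ≤ h x :=
          hmono (le_of_lt hrpos) (le_of_lt hx) (le_of_lt hN1)
        linarith
    · push_neg at hjump
      -- h x ≥ δ for all x > 0 : only finitely many nonzero terms
      have htend0 : Tendsto (fun k => h (f k)) atTop (𝓝 0) :=
        heq.summable.tendsto_atTop_zero
      have hev : ∀ᶠ k in atTop, h (f k) < δ := htend0.eventually_lt_const hδ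
      have hev0 : ∀ᶠ k in atTop, f k = 0 := by
        filter_upwards [hev] with k hk
        by_contra hk0
        have : 0 < f k := (hf k).lt_of_ne (Ne.symm hk0)
        exact absurd hk (not_lt.2 (hjump _ this))
      obtain ⟨N₀, hN₀⟩ := hev0.exists_forall_of_atTop
      set N := max N₀ (max i j + 1) with hN
      have hiN : i < N := lt_of_lt_of_le (Nat.lt_succ_of_le (le_max_left i j)) (le_max_right _ _)
      have hjN : j < N := lt_of_lt_of_le (Nat.lt_succ_of_le (le_max_right i j)) (le_max_right _ _)
      have hzero : ∀ b ∉ Finset.range N, f b = 0 := by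
        intro b hb
        have hbN : N ≤ b := le_of_not_gt (fun hlt => hb (Finset.mem_range.2 hlt))
        exact hN₀ b (le_trans (le_max_left _ _) hbN)
      have hfin : HasSum f (σ N) := hasSum_sum_of_ne_finset_zero hzero
      have hσs : σ N = s := hfin.unique hsum
      have hk := key N hiN hjN
      rw [hσs] at hk
      linarith
  refine ⟨part1, ?_⟩
  intro j hj
  have hz : ∀ b ≠ j, f b = 0 := by
    intro b hb
    by_contra hb0
    exact hb (part1 b j hb0 hj)
  exact (hasSum_single j hz).unique hsum
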